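/- Gaussian mechanism satisfies zCDP: if a function f has L2-sensitivity Δ (i.e., ‖f(X) − f(X')‖₂ ≤ Δ for all neighbouring datasets X, X'), then the mechanism M(X) = f(X) + N(0, τ·I) with noise variance τ satisfies ρ-zero-concentrated differential privacy with ρ = Δ²/(2τ). Concretely, for all α > 1 and all neighbouring X, X', the Rényi divergence of order α between M(X) and M(X') satisfies D_α(M(X) ‖ M(X')) ≤ (Δ²/(2τ))·α. -/
import Mathlib

open MeasureTheory ProbabilityTheory Real
open scoped ENNReal NNReal

/-- Rényi divergence of order `α` between `P` and `Q`:
`D_α(P‖Q) = (α−1)⁻¹ · log ∫ (dP/dQ)^α dQ`. -/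
noncomputable def renyiDiv {Ω : Type*} [MeasurableSpace Ω] (P Q : Measure Ω) (α : ℝ) : ℝ :=
  (α - 1)⁻¹ * Real.log (∫ x, ((P.rnDeriv Q) x).toReal ^ α ∂Q)

/-- The Gaussian mechanism: add independent `N(0, τ)` noise to each coordinate of `f`. -/
noncomputable def gaussianMechanism {X : Type*} {d : ℕ} (f : X → Fin d → ℝ) (τ : NNReal)
    (x : X) : Measure (Fin d → ℝ) :=
  Measure.pi (fun i => gaussianReal (f x i) τ)


lemma lintegral_pi_prod {n : ℕ} (μ : Fin n → Measure ℝ) [∀ i, SigmaFinite (μ i)]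
    (f : Fin n → ℝ → ℝ≥0∞) (hf : ∀ i, Measurable (f i)) :
    ∫⁻ x, ∏ i, f i (x i) ∂(Measure.pi μ) = ∏ i, ∫⁻ x, f i x ∂(μ i) := by
  induction n with
  | zero => simp
  | succ n ih =>
    have hmp := measurePreserving_piFinSuccAbove μ 0
    have hmeas : Measurable fun (p : ℝ × (Fin n → ℝ)) => f 0 p.1 * ∏ j : Fin n, f j.succ (p.2 j) :=
      ((hf 0).comp measurable_fst).mul
        (Finset.measurable_prod _ fun j _ => (hf j.succ).comp ((measurable_pi_apply j).comp measurable_snd))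
    have hpi : (Measure.pi fun j => μ ((0 : Fin (n+1)).succAbove j)) = Measure.pi fun j : Fin n => μ j.succ := by
      simp [Fin.zero_succAbove]
    have key : ∫⁻ x, ∏ i, f i (x i) ∂(Measure.pi μ)
        = ∫⁻ p, f 0 p.1 * ∏ j : Fin n, f j.succ (p.2 j)
            ∂((μ 0).prod (Measure.pi fun j : Fin n => μ j.succ)) := by
      rw [← hpi, ← hmp.lintegral_comp hmeas]
      congr 1 with x
      rw [Fin.prod_univ_succ]
      simp [MeasurableEquiv.piFinSuccAbove, Fin.tail]
    rw [key, lintegral_prod_mul (f := f 0) (g := fun y : Fin n → ℝ => ∏ j, f j.succ (y j))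
        ((hf 0).aemeasurable)
        ((Finset.measurable_prod _ fun j _ => (hf j.succ).comp (measurable_pi_apply j)).aemeasurable),
      ih (fun j : Fin n => μ j.succ) (fun j => f j.succ) (fun j => hf j.succ), Fin.prod_univ_succ]

lemma pi_withDensity {n : ℕ} (μ : Fin n → Measure ℝ) [∀ i, SigmaFinite (μ i)]
    (f : Fin n → ℝ → ℝ≥0∞) (hf : ∀ i, Measurable (f i))
    [∀ i, SigmaFinite ((μ i).withDensity (f i))] :
    Measure.pi (fun i => (μ i).withDensity (f i))
      = (Measure.pi μ).withDensity (fun x => ∏ i, f i (x i)) := by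
  refine Measure.pi_eq fun s hs => ?_
  rw [withDensity_apply _ (MeasurableSet.univ_pi hs), ← lintegral_indicator (MeasurableSet.univ_pi hs) (fun x => ∏ i, f i (x i))]
  have : ∀ x : Fin n → ℝ, (Set.pi Set.univ s).indicator (fun x => ∏ i, f i (x i)) x
      = ∏ i, (s i).indicator (f i) (x i) := by
    intro x
    by_cases hx : x ∈ Set.pi Set.univ s
    · rw [Set.indicator_of_mem hx]
      exact Finset.prod_congr rfl fun i _ => (Set.indicator_of_mem (hx i (Set.mem_univ i)) _).symm
    · rw [Set.indicator_of_notMem hx]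
      rw [Set.mem_univ_pi] at hx
      push_neg at hx
      obtain ⟨j, hj⟩ := hx
      exact (Finset.prod_eq_zero (Finset.mem_univ j) (Set.indicator_of_notMem hj _)).symm
  simp_rw [this]
  rw [lintegral_pi_prod μ _ (fun i => (hf i).indicator (hs i))]
  exact Finset.prod_congr rfl fun i _ => by
    rw [lintegral_indicator (hs i) _, ← withDensity_apply _ (hs i)]

lemma gaussian_ratio_pointwise (v : ℝ≥0) (hv : 0 < v) (μ ν α t : ℝ) :
    gaussianPDFReal ν v t * rexp (α * ((t - ν)^2 - (t - μ)^2) / (2*v))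
      = rexp (α*(α-1)*(μ-ν)^2/(2*v)) * gaussianPDFReal (ν + α*(μ-ν)) v t := by
  have hv' : (0:ℝ) < v := hv
  have h2v : (2*(v:ℝ)) ≠ 0 := by positivity
  have key : -(t - ν) ^ 2 / (2 * (v:ℝ)) + α * ((t - ν) ^ 2 - (t - μ) ^ 2) / (2 * (v:ℝ))
      = -(t - (ν + α * (μ - ν))) ^ 2 / (2 * (v:ℝ)) + α * (α - 1) * (μ - ν) ^ 2 / (2 * (v:ℝ)) := by
    field_simp
    ring
  simp only [gaussianPDFReal]
  rw [mul_assoc, ← exp_add, key, exp_add]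
  ring

lemma lintegral_gaussian_ratio (v : ℝ≥0) (hv : 0 < v) (μ ν α : ℝ) :
    ∫⁻ t, ENNReal.ofReal (rexp (α * ((t - ν)^2 - (t - μ)^2) / (2*v))) ∂(gaussianReal ν v)
      = ENNReal.ofReal (rexp (α*(α-1)*(μ-ν)^2/(2*v))) := by
  have hv' : v ≠ 0 := hv.ne'
  have hmeas : Measurable fun t : ℝ => ENNReal.ofReal (rexp (α * ((t - ν)^2 - (t - μ)^2) / (2*v))) := by
    fun_prop
  rw [gaussianReal_of_var_ne_zero ν hv',
    lintegral_withDensity_eq_lintegral_mul _ (measurable_gaussianPDF ν v) hmeas]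
  have : ∀ t : ℝ, (gaussianPDF ν v * fun t => ENNReal.ofReal (rexp (α * ((t - ν)^2 - (t - μ)^2) / (2*v)))) t
      = ENNReal.ofReal (rexp (α*(α-1)*(μ-ν)^2/(2*v))) * ENNReal.ofReal (gaussianPDFReal (ν + α*(μ-ν)) v t) := by
    intro t
    simp only [Pi.mul_apply, gaussianPDF]
    rw [← ENNReal.ofReal_mul (gaussianPDFReal_nonneg ν v t), gaussian_ratio_pointwise v hv,
      ENNReal.ofReal_mul (exp_pos _).le]
  simp_rw [this]
  rw [lintegral_const_mul _ ((measurable_gaussianPDFReal _ _).ennreal_ofReal), lintegral_gaussianPDFReal_eq_one _ hv', mul_one]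

/-- Gaussian mechanism satisfies `Δ²/(2τ)`-zCDP: if `f` has L2-sensitivity `Δ`, then for all
`α > 1` and neighbouring datasets, `D_α(M(X) ‖ M(X')) ≤ (Δ²/(2τ))·α`. -/
theorem gaussianMechanism_zCDP {X : Type*} {d : ℕ} (Neighbor : X → X → Prop)
    (f : X → Fin d → ℝ) (τ : NNReal) (hτ : 0 < τ) (Δ : ℝ)
    (hsens : ∀ x x', Neighbor x x' →
      Real.sqrt (∑ i, (f x i - f x' i) ^ 2) ≤ Δ) :
    ∀ α : ℝ, 1 < α → ∀ x x', Neighbor x x' →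
      renyiDiv (gaussianMechanism f τ x) (gaussianMechanism f τ x') α ≤
        (Δ ^ 2 / (2 * (τ : ℝ))) * α := by
  intro α hα x x' hN
  have hv : (0:ℝ) < (τ:ℝ) := hτ
  set μ : Fin d → ℝ := f x with hμ
  set ν : Fin d → ℝ := f x' with hν
  set r : Fin d → ℝ → ℝ := fun i t => rexp (((t - ν i)^2 - (t - μ i)^2) / (2*(τ:ℝ))) with hr
  have hrmeas : ∀ i, Measurable fun t => ENNReal.ofReal (r i t) := fun i => by
    rw [hr]; fun_prop
  -- one-dimensional density identity
  have h1 : ∀ i, gaussianReal (μ i) τ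
      = (gaussianReal (ν i) τ).withDensity (fun t => ENNReal.ofReal (r i t)) := by
    intro i
    rw [gaussianReal_of_var_ne_zero _ hτ.ne', gaussianReal_of_var_ne_zero _ hτ.ne',
      ← withDensity_mul _ (measurable_gaussianPDF _ _) (hrmeas i)]
    congr 1
    ext t
    simp only [Pi.mul_apply, gaussianPDF]
    rw [← ENNReal.ofReal_mul (gaussianPDFReal_nonneg _ _ _)]
    congr 1
    have h := gaussian_ratio_pointwise τ hτ (μ i) (ν i) 1 t
    simpa using h.symm
  haveI : ∀ i, SigmaFinite ((gaussianReal (ν i) τ).withDensity fun t => ENNReal.ofReal (r i t)) :=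
    fun i => by rw [← h1 i]; infer_instance
  have hP : gaussianMechanism f τ x
      = (gaussianMechanism f τ x').withDensity (fun y => ∏ i, ENNReal.ofReal (r i (y i))) := by
    unfold gaussianMechanism
    rw [show (fun i => gaussianReal (f x i) τ)
        = fun i => (gaussianReal (ν i) τ).withDensity (fun t => ENNReal.ofReal (r i t)) from
      funext fun i => h1 i]
    exact pi_withDensity _ _ hrmeas
  have hG : Measurable fun y : Fin d → ℝ => ∏ i, ENNReal.ofReal (r i (y i)) :=
    Finset.measurable_prod _ fun i _ => (hrmeas i).comp (measurable_pi_apply i)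
  haveI : IsProbabilityMeasure (gaussianMechanism f τ x') := by
    unfold gaussianMechanism; infer_instance
  have hrn : (gaussianMechanism f τ x).rnDeriv (gaussianMechanism f τ x')
      =ᵐ[gaussianMechanism f τ x'] fun y => ∏ i, ENNReal.ofReal (r i (y i)) := by
    rw [hP]
    exact Measure.rnDeriv_withDensity _ hG
  -- rewrite the integrand
  have hexp : ∀ z : ℝ, (rexp z) ^ α = rexp (α * z) := fun z => by
    rw [Real.rpow_def_of_pos (exp_pos z), Real.log_exp, mul_comm]
  have hint : ∫ y, (((gaussianMechanism f τ x).rnDeriv (gaussianMechanism f τ x')) y).toReal ^ α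
        ∂(gaussianMechanism f τ x')
      = ∫ y, ∏ i, rexp (α * ((y i - ν i)^2 - (y i - μ i)^2) / (2*(τ:ℝ)))
        ∂(gaussianMechanism f τ x') := by
    refine integral_congr_ae ?_
    filter_upwards [hrn] with y hy
    rw [hy, ENNReal.toReal_prod, ← Real.finset_prod_rpow _ _ (fun i _ => ENNReal.toReal_nonneg) α]
    refine Finset.prod_congr rfl fun i _ => ?_
    rw [ENNReal.toReal_ofReal (exp_pos _).le, hexp, ← mul_div_assoc]
  -- compute the integral
  have hmeas2 : ∀ i, Measurable fun t : ℝ =>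
      ENNReal.ofReal (rexp (α * ((t - ν i)^2 - (t - μ i)^2) / (2*(τ:ℝ)))) := fun i => by fun_prop
  have hval : ∫ y, ∏ i, rexp (α * ((y i - ν i)^2 - (y i - μ i)^2) / (2*(τ:ℝ)))
        ∂(gaussianMechanism f τ x')
      = rexp (∑ i, α * (α-1) * (μ i - ν i)^2 / (2*(τ:ℝ))) := by
    rw [integral_eq_lintegral_of_nonneg_ae
      (ae_of_all _ fun y => Finset.prod_nonneg fun i _ => (exp_pos _).le)
      ((Finset.measurable_prod _ fun i _ =>
        (by fun_prop : Measurable fun t : ℝ => rexp (α * ((t - ν i)^2 - (t - μ i)^2) / (2*(τ:ℝ)))).comp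
          (measurable_pi_apply i)).aestronglyMeasurable)]
    have : ∀ y : Fin d → ℝ, ENNReal.ofReal (∏ i, rexp (α * ((y i - ν i)^2 - (y i - μ i)^2) / (2*(τ:ℝ))))
        = ∏ i, ENNReal.ofReal (rexp (α * ((y i - ν i)^2 - (y i - μ i)^2) / (2*(τ:ℝ)))) :=
      fun y => ENNReal.ofReal_prod_of_nonneg fun i _ => (exp_pos _).le
    simp_rw [this]
    rw [show (gaussianMechanism f τ x' : Measure (Fin d → ℝ))
        = Measure.pi (fun i => gaussianReal (ν i) τ) from rfl]
    rw [lintegral_pi_prod _ _ hmeas2]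
    have : ∀ i : Fin d, ∫⁻ t, ENNReal.ofReal (rexp (α * ((t - ν i)^2 - (t - μ i)^2) / (2*(τ:ℝ))))
        ∂(gaussianReal (ν i) τ) = ENNReal.ofReal (rexp (α*(α-1)*(μ i - ν i)^2/(2*(τ:ℝ)))) :=
      fun i => lintegral_gaussian_ratio τ hτ (μ i) (ν i) α
    simp_rw [this]
    rw [← ENNReal.ofReal_prod_of_nonneg fun i _ => (exp_pos _).le, ← Real.exp_sum,
      ENNReal.toReal_ofReal (exp_pos _).le]
  -- conclude
  rw [renyiDiv, hint, hval, Real.log_exp]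
  have hS : ∑ i, (μ i - ν i)^2 ≤ Δ^2 := by
    have h0 : (0:ℝ) ≤ ∑ i, (μ i - ν i)^2 := Finset.sum_nonneg fun i _ => sq_nonneg _
    have hΔ := hsens x x' hN
    calc ∑ i, (μ i - ν i)^2 = Real.sqrt (∑ i, (μ i - ν i)^2) ^ 2 := (Real.sq_sqrt h0).symm
      _ ≤ Δ^2 := pow_le_pow_left₀ (Real.sqrt_nonneg _) hΔ 2
  have hsum : ∑ i, α * (α-1) * (μ i - ν i)^2 / (2*(τ:ℝ))
      = (α-1) * (α * (∑ i, (μ i - ν i)^2) / (2*(τ:ℝ))) := by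
    rw [← Finset.sum_div, ← Finset.mul_sum]
    ring
  rw [hsum, ← mul_assoc, inv_mul_cancel₀ (by linarith : α - 1 ≠ 0), one_mul]
  calc α * (∑ i, (μ i - ν i)^2) / (2*(τ:ℝ)) ≤ α * Δ^2 / (2*(τ:ℝ)) := by
        apply div_le_div_of_nonneg_right ?_ (by positivity)
        exact mul_le_mul_of_nonneg_left hS (by linarith)
    _ = Δ^2 / (2*(τ:ℝ)) * α := by ring
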